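/- For every linearization L of a pseudo-linear set X ⊆ ℤ^n, dim(X) = dim(L). -/

import Mathlib

open scoped Pointwise

/-- The finite set `B` generates the set `V` as a ℚ-vector space. -/
def GeneratesQ {n : ℕ} (B : Finset (Fin n → ℚ)) (V : Set (Fin n → ℚ)) : Prop :=
  (Submodule.span ℚ (B : Set (Fin n → ℚ)) : Set (Fin n → ℚ)) = V

/-- The rank of a vector space `V ⊆ ℚ^n`: minimal cardinality of a finite generating set. -/
noncomputable def rankOf {n : ℕ} (V : Set (Fin n → ℚ)) : ℕ :=
  sInf {d | ∃ B : Finset (Fin n → ℚ), B.card = d ∧ GeneratesQ B V}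

-- Dimension of a subset of ℚ^n via finite covers by translates of vector spaces.
open Classical in
noncomputable def dimQ {n : ℕ} (X : Set (Fin n → ℚ)) : WithBot ℕ :=
  if X = ∅ then ⊥ else
    ↑(sInf {d : ℕ | ∃ (k : ℕ) (V : Fin k → Submodule ℚ (Fin n → ℚ))
        (a : Fin k → (Fin n → ℚ)),
        (∀ j, rankOf ((V j : Set (Fin n → ℚ))) ≤ d) ∧
        X ⊆ ⋃ j, (a j +ᵥ (V j : Set (Fin n → ℚ)))})

/-- Dimension of a subset of ℤ^n, via the canonical embedding ℤ^n → ℚ^n. -/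
noncomputable def dimZ {n : ℕ} (X : Set (Fin n → ℤ)) : WithBot ℕ :=
  dimQ ((fun (x : Fin n → ℤ) (i : Fin n) => (x i : ℚ)) '' X)

/-- `a` is an interior vector of the monoid `M ⊆ ℤ^n`. -/
def IsInteriorZ {n : ℕ} (M : Set (Fin n → ℤ)) (a : Fin n → ℤ) : Prop :=
  a ∈ M ∧ ∀ x ∈ M, ∃ N : ℕ, 1 ≤ N ∧ ∃ m ∈ M, N • a = x + m

/-- `M` is a finitely generated (additive sub)monoid of ℤ^n (as a set). -/
def IsFGMonoid {n : ℕ} (M : Set (Fin n → ℤ)) : Prop :=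
  ∃ P : Finset (Fin n → ℤ),
    M = (AddSubmonoid.closure (P : Set (Fin n → ℤ)) : Set (Fin n → ℤ))

/-- `L` is a linearization of the pseudo-linear set `X`. -/
def IsLinearization {n : ℕ} (L X : Set (Fin n → ℤ)) : Prop :=
  ∃ (b : Fin n → ℤ) (M : Set (Fin n → ℤ)), IsFGMonoid M ∧ L = b +ᵥ M ∧ X ⊆ L ∧
    ∀ R : Finset (Fin n → ℤ), (∀ r ∈ R, IsInteriorZ M r) →
      ∃ x ∈ X, x +ᵥ (AddSubmonoid.closure (R : Set (Fin n → ℤ)) : Set (Fin n → ℤ)) ⊆ X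

/-- `X ⊆ ℤ^n` is pseudo-linear. -/
def IsPseudoLinear {n : ℕ} (X : Set (Fin n → ℤ)) : Prop :=
  ∃ L, IsLinearization L X

/-- the embedding ℤ^n → ℚ^n as an AddMonoidHom -/
def iotaF (n : ℕ) : (Fin n → ℤ) →+ (Fin n → ℚ) where
  toFun := fun x i => (x i : ℚ)
  map_zero' := by funext i; simp
  map_add' := fun a b => by funext i; simp

lemma iotaF_apply {n : ℕ} (x : Fin n → ℤ) : iotaF n x = fun i => (x i : ℚ) := rfl

lemma finrank_le_rankOf {n : ℕ} (V : Submodule ℚ (Fin n → ℚ)) :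
    Module.finrank ℚ V ≤ rankOf (V : Set (Fin n → ℚ)) := by
  have hne : {d | ∃ B : Finset (Fin n → ℚ), B.card = d ∧ GeneratesQ B V}.Nonempty := by
    obtain ⟨S, hS⟩ := IsNoetherian.noetherian V
    exact ⟨S.card, S, rfl, by rw [GeneratesQ, hS]⟩
  obtain ⟨B, hBcard, hBgen⟩ := Nat.sInf_mem hne
  have hspan : Submodule.span ℚ (B : Set (Fin n → ℚ)) = V := SetLike.coe_injective hBgen
  calc Module.finrank ℚ V = Module.finrank ℚ (Submodule.span ℚ (B : Set (Fin n → ℚ))) := by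
        rw [hspan]
    _ ≤ B.card := finrank_span_finset_le_card B
    _ = rankOf (V : Set (Fin n → ℚ)) := hBcard

lemma card_le_finrank_of_li {n m : ℕ} (V : Submodule ℚ (Fin n → ℚ))
    (w : Fin m → (Fin n → ℚ)) (hw : ∀ i, w i ∈ V) (hind : LinearIndependent ℚ w) :
    m ≤ Module.finrank ℚ V := by
  have h2 : LinearIndependent ℚ (fun i => (⟨w i, hw i⟩ : V)) := by
    apply LinearIndependent.of_comp V.subtype
    exact hind
  simpa using h2.fintype_card_le_finrank

lemma rankOf_le_card_of_gen {n : ℕ} (V : Submodule ℚ (Fin n → ℚ)) (B : Finset (Fin n → ℚ))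
    (h : Submodule.span ℚ (B : Set (Fin n → ℚ)) = V) :
    rankOf (V : Set (Fin n → ℚ)) ≤ B.card :=
  Nat.sInf_le ⟨B, rfl, by rw [GeneratesQ, h]⟩

/-- extraction of an independent family of the right cardinality from `S` -/
lemma exists_indep {n : ℕ} (S : Set (Fin n → ℤ)) :
    ∃ (m : ℕ) (q : Fin m → (Fin n → ℤ)), (∀ i, q i ∈ S) ∧
      LinearIndependent ℚ (fun i => iotaF n (q i)) ∧
      rankOf ((Submodule.span ℚ (iotaF n '' S) : Submodule ℚ (Fin n → ℚ)) :
        Set (Fin n → ℚ)) = m := by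
  obtain ⟨t, hts, htsp, hti⟩ := exists_linearIndependent ℚ (iotaF n '' S)
  have htfin : t.Finite := hti.setFinite
  set B := htfin.toFinset with hB
  have hBt : (B : Set (Fin n → ℚ)) = t := htfin.coe_toFinset
  refine ⟨B.card, ?_⟩
  -- independent family indexed by Fin B.card
  have e := B.equivFin
  set qQ : Fin B.card → (Fin n → ℚ) := fun i => ((e.symm i : B) : Fin n → ℚ) with hqQ
  have hqQmem : ∀ i, qQ i ∈ t := by
    intro i
    rw [← hBt]
    exact (e.symm i).2
  have hqQind : LinearIndependent ℚ qQ := by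
    set f : Fin B.card → t := fun i => ⟨(e.symm i : B), hqQmem i⟩ with hf
    have hfinj : Function.Injective f := by
      intro i j hij
      have h1 : (f i : Fin n → ℚ) = (f j : Fin n → ℚ) := congrArg Subtype.val hij
      have h2 : e.symm i = e.symm j := Subtype.ext h1
      simpa using congrArg e h2
    have h3 := hti.comp f hfinj
    have h4 : (Subtype.val ∘ f) = qQ := by funext i; rfl
    rwa [h4] at h3
  have hqQS : ∀ i, ∃ z ∈ S, iotaF n z = qQ i := fun i => hts (hqQmem i)
  choose q hqS hqι using hqQS
  refine ⟨q, hqS, ?_, ?_⟩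
  · have : (fun i => iotaF n (q i)) = qQ := funext hqι
    rw [this]; exact hqQind
  · apply le_antisymm
    · apply rankOf_le_card_of_gen
      rw [hBt, htsp]
    · -- B.card ≤ rankOf: via finrank
      have h1 : B.card ≤ Module.finrank ℚ (Submodule.span ℚ (iotaF n '' S)) := by
        apply card_le_finrank_of_li _ qQ _ hqQind
        intro i
        rw [← htsp]
        exact Submodule.subset_span (hqQmem i)
      exact h1.trans (finrank_le_rankOf _)

/-- span of image of closure equals span of image -/
lemma span_image_closure {n : ℕ} (s : Set (Fin n → ℤ)) :
    Submodule.span ℚ (iotaF n '' (AddSubmonoid.closure s : Set (Fin n → ℤ))) =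
      Submodule.span ℚ (iotaF n '' s) := by
  apply le_antisymm
  · rw [Submodule.span_le]
    have : iotaF n '' (AddSubmonoid.closure s : Set (Fin n → ℤ)) =
        ((AddSubmonoid.closure s).map (iotaF n) : Set (Fin n → ℚ)) := rfl
    rw [this, AddMonoidHom.map_mclosure]
    intro x hx
    have : AddSubmonoid.closure (iotaF n '' s) ≤
        (Submodule.span ℚ (iotaF n '' s)).toAddSubmonoid := by
      rw [AddSubmonoid.closure_le]
      exact Submodule.subset_span
    exact this hx
  · exact Submodule.span_mono (Set.image_mono AddSubmonoid.subset_closure)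

lemma dimZ_eq {n : ℕ} (X : Set (Fin n → ℤ)) : dimZ X = dimQ (iotaF n '' X) := rfl

/-- Lemma A: upper bound -/
lemma dimZ_le_rank {n : ℕ} (X : Set (Fin n → ℤ)) (c : Fin n → ℤ) (M : Set (Fin n → ℤ))
    (hne : X.Nonempty) (hXM : X ⊆ c +ᵥ M) :
    dimZ X ≤ (rankOf ((Submodule.span ℚ (iotaF n '' M) : Submodule ℚ (Fin n → ℚ)) :
      Set (Fin n → ℚ)) : WithBot ℕ) := by
  rw [dimZ_eq, dimQ, if_neg (hne.image _).ne_empty]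
  refine WithBot.coe_le_coe.mpr (Nat.sInf_le ?_)
  refine ⟨1, fun _ => Submodule.span ℚ (iotaF n '' M), fun _ => iotaF n c,
    fun _ => le_rfl, ?_⟩
  rintro y ⟨x, hxX, rfl⟩
  apply Set.mem_iUnion.mpr ⟨0, ?_⟩
  obtain ⟨mm, hmm, hxe⟩ := hXM hxX
  refine Set.mem_vadd_set.mpr ⟨iotaF n mm, Submodule.subset_span ⟨mm, hmm, rfl⟩, ?_⟩
  have hxe' : c + mm = x := hxe
  rw [vadd_eq_add, ← map_add, hxe']

lemma rank_le_dimZ {n m : ℕ} (X : Set (Fin n → ℤ)) (x : Fin n → ℤ)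
    (q : Fin m → (Fin n → ℤ)) (hind : LinearIndependent ℚ (fun i => iotaF n (q i)))
    (hsub : ∀ t : Fin m → ℕ, (x + ∑ i, t i • q i) ∈ X) :
    (m : WithBot ℕ) ≤ dimZ X := by
  classical
  have hxX : x ∈ X := by have h := hsub 0; simpa using h
  rw [dimZ_eq, dimQ, if_neg (Set.Nonempty.ne_empty ⟨x, hxX⟩ ∘
    (Set.image_eq_empty.mp ·))]
  -- the covering set is nonempty (cover by the whole space)
  have htop : ∃ B : Finset (Fin n → ℚ),
      Submodule.span ℚ (B : Set (Fin n → ℚ)) = (⊤ : Submodule ℚ (Fin n → ℚ)) := by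
    refine ⟨Finset.image (Pi.basisFun ℚ (Fin n)) Finset.univ, ?_⟩
    rw [Finset.coe_image, Finset.coe_univ, Set.image_univ]
    exact Module.Basis.span_eq _
  obtain ⟨B₀, hB₀⟩ := htop
  have hSne : {d : ℕ | ∃ (k : ℕ) (V : Fin k → Submodule ℚ (Fin n → ℚ))
      (a : Fin k → (Fin n → ℚ)),
      (∀ j, rankOf ((V j : Set (Fin n → ℚ))) ≤ d) ∧
      (fun (x : Fin n → ℤ) (i : Fin n) => ((x i : ℚ))) '' X ⊆
        ⋃ j, (a j +ᵥ (V j : Set (Fin n → ℚ)))}.Nonempty := by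
    refine ⟨B₀.card, 1, fun _ => ⊤, fun _ => 0, fun _ => rankOf_le_card_of_gen _ _ hB₀, ?_⟩
    intro y _
    exact Set.mem_iUnion.mpr ⟨0, Set.mem_vadd_set.mpr ⟨y, trivial, zero_vadd _ _⟩⟩
  refine WithBot.coe_le_coe.mpr (le_csInf hSne ?_)
  rintro d' hd'
  show m ≤ d'
  obtain ⟨k, V, a, hrank, hcov⟩ := hd'
  by_contra hmd
  push_neg at hmd
  -- the points of the grid
  set pt : (Fin m → Fin (k+1)) → (Fin n → ℚ) :=
    fun t => iotaF n (x + ∑ i, (t i : ℕ) • q i) with hpt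
  have hpt_eq : ∀ t : Fin m → Fin (k+1),
      pt t = iotaF n x + ∑ i, ((t i : ℕ) : ℚ) • iotaF n (q i) := by
    intro t
    rw [hpt]
    simp only [map_add, map_sum]
    congr 1
    refine Finset.sum_congr rfl fun i _ => ?_
    rw [map_nsmul, Nat.cast_smul_eq_nsmul]
  have hptU : ∀ t, ∃ j, pt t ∈ a j +ᵥ (V j : Set (Fin n → ℚ)) := by
    intro t
    exact Set.mem_iUnion.mp (hcov ⟨_, hsub (fun i => (t i : ℕ)), rfl⟩)
  choose f hf using hptU
  -- pigeonhole
  have hcard : (Finset.univ : Finset (Fin k)).card * (k+1)^(m-1) <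
      (Finset.univ : Finset (Fin m → Fin (k+1))).card := by
    rw [Finset.card_univ, Finset.card_univ, Fintype.card_fin,
      Fintype.card_pi_const, Fintype.card_fin]
    have hm : m - 1 + 1 = m := by omega
    calc k * (k+1)^(m-1) < (k+1) * (k+1)^(m-1) := by
          have : (0:ℕ) < (k+1)^(m-1) := pow_pos (Nat.succ_pos k) _
          exact Nat.mul_lt_mul_of_lt_of_le (Nat.lt_succ_self k) le_rfl this
      _ = (k+1)^(m-1+1) := by ring
      _ = (k+1)^m := by rw [hm]
  obtain ⟨j, -, hj⟩ := Finset.exists_lt_card_fiber_of_mul_lt_card_of_maps_to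
    (fun t _ => Finset.mem_univ (f t)) hcard
  -- there is a direction not in V j
  have hi₀ : ∃ i, iotaF n (q i) ∉ (V j : Set (Fin n → ℚ)) := by
    by_contra hall
    push_neg at hall
    have h1 : m ≤ Module.finrank ℚ (V j) :=
      card_le_finrank_of_li (V j) _ hall hind
    have h2 : Module.finrank ℚ (V j) ≤ d' := (finrank_le_rankOf (V j)).trans (hrank j)
    omega
  obtain ⟨i₀, hi₀⟩ := hi₀
  -- injective projection forgetting coordinate i₀
  set F := Finset.univ.filter (fun t => f t = j) with hF
  have hinj : Set.InjOn (fun (t : Fin m → Fin (k+1)) (s : {i : Fin m // i ≠ i₀}) => t s.1)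
      ↑F := by
    intro t ht t' ht' hgg
    have hfj : f t = j := (Finset.mem_filter.mp ht).2
    have hfj' : f t' = j := (Finset.mem_filter.mp ht').2
    have hoff : ∀ i, i ≠ i₀ → t i = t' i := fun i hi => congrFun hgg ⟨i, hi⟩
    -- difference lies in V j
    obtain ⟨v, hv, hveq⟩ := Set.mem_vadd_set.mp (hfj ▸ hf t)
    obtain ⟨v', hv', hveq'⟩ := Set.mem_vadd_set.mp (hfj' ▸ hf t')
    have hdiff : pt t - pt t' ∈ V j := by
      have : pt t - pt t' = v - v' := by
        rw [← hveq, ← hveq', vadd_eq_add, vadd_eq_add]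
        abel
      rw [this]
      exact sub_mem hv hv'
    have hcalc : pt t - pt t' =
        (((t i₀ : ℕ) : ℚ) - ((t' i₀ : ℕ) : ℚ)) • iotaF n (q i₀) := by
      rw [hpt_eq, hpt_eq]
      have : (iotaF n x + ∑ i, ((t i : ℕ) : ℚ) • iotaF n (q i)) -
          (iotaF n x + ∑ i, ((t' i : ℕ) : ℚ) • iotaF n (q i)) =
          ∑ i, ((((t i : ℕ) : ℚ) - ((t' i : ℕ) : ℚ)) • iotaF n (q i)) := by
        rw [Finset.sum_congr rfl (fun i _ => sub_smul (((t i : ℕ) : ℚ)) _ _),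
          Finset.sum_sub_distrib]
        abel
      rw [this]
      refine Finset.sum_eq_single i₀ (fun i _ hi => ?_) (by simp)
      rw [hoff i hi, sub_self, zero_smul]
    have hti : t i₀ = t' i₀ := by
      by_contra hne
      have hc : (((t i₀ : ℕ) : ℚ) - ((t' i₀ : ℕ) : ℚ)) ≠ 0 := by
        have : (t i₀ : ℕ) ≠ (t' i₀ : ℕ) := fun hh => hne (Fin.val_injective hh)
        intro hh
        apply this
        exact_mod_cast sub_eq_zero.mp hh
      apply hi₀
      have : iotaF n (q i₀) =
          (((t i₀ : ℕ) : ℚ) - ((t' i₀ : ℕ) : ℚ))⁻¹ • (pt t - pt t') := by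
        rw [hcalc, smul_smul, inv_mul_cancel₀ hc, one_smul]
      rw [this]
      exact Submodule.smul_mem _ _ hdiff
    funext i
    by_cases hii : i = i₀
    · rw [hii, hti]
    · exact hoff i hii
  have hle : F.card ≤ (k+1)^(m-1) := by
    have := Finset.card_le_card_of_injOn _ (fun t _ => Finset.mem_univ
      ((fun (t : Fin m → Fin (k+1)) (s : {i : Fin m // i ≠ i₀}) => t s.1) t)) hinj
    calc F.card ≤ (Finset.univ : Finset ({i : Fin m // i ≠ i₀} → Fin (k+1))).card := this
      _ = (k+1)^(m-1) := by
          rw [Finset.card_univ, Fintype.card_fun, Fintype.card_fin]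
          congr 1
          rw [Fintype.card_subtype_compl, Fintype.card_subtype_eq, Fintype.card_fin]
  have hj2 : (k+1)^(m-1) < F.card := by
    rw [hF]
    convert hj using 2
  omega
lemma interior_sum {n : ℕ} (P : Finset (Fin n → ℤ)) :
    IsInteriorZ (AddSubmonoid.closure (P : Set (Fin n → ℤ)) : Set (Fin n → ℤ))
      (∑ p ∈ P, p) := by
  set a : Fin n → ℤ := ∑ p ∈ P, p with ha
  constructor
  · exact sum_mem (fun p hp => AddSubmonoid.subset_closure hp)
  · intro x hx
    induction hx using AddSubmonoid.closure_induction with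
    | mem y hy =>
      refine ⟨1, le_rfl, ∑ p ∈ P.erase y, p, ?_, ?_⟩
      · exact sum_mem (fun p hp => AddSubmonoid.subset_closure (P.erase_subset y hp))
      · rw [one_smul, ha, ← Finset.add_sum_erase P _ hy]
    | zero => exact ⟨1, le_rfl, a, sum_mem (fun p hp => AddSubmonoid.subset_closure hp),
        by rw [one_smul, zero_add]⟩
    | add y z hy hz ihy ihz =>
      obtain ⟨N₁, hN₁, m₁, hm₁, he₁⟩ := ihy
      obtain ⟨N₂, hN₂, m₂, hm₂, he₂⟩ := ihz
      refine ⟨N₁ + N₂, by omega, m₁ + m₂, add_mem hm₁ hm₂, ?_⟩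
      rw [add_nsmul, he₁, he₂]
      abel

lemma interior_add {n : ℕ} (M : AddSubmonoid (Fin n → ℤ)) (a p : Fin n → ℤ)
    (ha : IsInteriorZ (M : Set (Fin n → ℤ)) a) (hp : p ∈ M) :
    IsInteriorZ (M : Set (Fin n → ℤ)) (a + p) := by
  refine ⟨add_mem ha.1 hp, fun x hx => ?_⟩
  obtain ⟨N, hN, mm, hmm, he⟩ := ha.2 x hx
  refine ⟨N, hN, mm + N • p, add_mem hmm (AddSubmonoid.nsmul_mem M hp N), ?_⟩
  rw [smul_add, he]
  abel
theorem stmt13 {n : ℕ} (X L : Set (Fin n → ℤ)) (h : IsLinearization L X) :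
    dimZ X = dimZ L := by
  obtain ⟨b, M, ⟨P, hP⟩, hL, hXL, hRprop⟩ := h
  subst hP
  subst hL
  obtain ⟨x₀, hx₀, -⟩ := hRprop ∅ (by simp)
  -- upper bounds
  have hup_X : dimZ X ≤ ((rankOf ((Submodule.span ℚ (iotaF n ''
      (AddSubmonoid.closure (P : Set (Fin n → ℤ)) : Set (Fin n → ℤ))) :
      Submodule ℚ (Fin n → ℚ)) : Set (Fin n → ℚ))) : WithBot ℕ) :=
    dimZ_le_rank X b _ ⟨x₀, hx₀⟩ hXL
  have hup_L : dimZ (b +ᵥ (AddSubmonoid.closure (P : Set (Fin n → ℤ)) :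
      Set (Fin n → ℤ))) ≤ ((rankOf ((Submodule.span ℚ (iotaF n ''
      (AddSubmonoid.closure (P : Set (Fin n → ℤ)) : Set (Fin n → ℤ))) :
      Submodule ℚ (Fin n → ℚ)) : Set (Fin n → ℚ))) : WithBot ℕ) := by
    refine dimZ_le_rank _ b _ ⟨b, ?_⟩ subset_rfl
    exact Set.mem_vadd_set.mpr ⟨0, zero_mem _, by rw [vadd_eq_add, add_zero]⟩
  -- lower bound for L
  obtain ⟨m, q, hqmem, hqind, hqrank⟩ :=
    exists_indep (AddSubmonoid.closure (P : Set (Fin n → ℤ)) : Set (Fin n → ℤ))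
  have hlow_L : ((m : ℕ) : WithBot ℕ) ≤ dimZ (b +ᵥ (AddSubmonoid.closure
      (P : Set (Fin n → ℤ)) : Set (Fin n → ℤ))) := by
    refine rank_le_dimZ _ b q hqind fun t => ?_
    refine Set.mem_vadd_set.mpr ⟨∑ i, t i • q i, ?_, by rw [vadd_eq_add]⟩
    exact sum_mem fun i _ => AddSubmonoid.nsmul_mem _ (hqmem i) _
  -- the interior vectors
  set a : Fin n → ℤ := ∑ p ∈ P, p with ha
  set R : Finset (Fin n → ℤ) := insert a (P.image (fun p => a + p)) with hR
  have hRint : ∀ r ∈ R, IsInteriorZ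
      (AddSubmonoid.closure (P : Set (Fin n → ℤ)) : Set (Fin n → ℤ)) r := by
    intro r hr
    rcases Finset.mem_insert.mp hr with h | h
    · rw [h]; exact interior_sum P
    · obtain ⟨p, hp, rfl⟩ := Finset.mem_image.mp h
      exact interior_add _ a p (interior_sum P) (AddSubmonoid.subset_closure hp)
  obtain ⟨x, hxX, hxsub⟩ := hRprop R hRint
  -- span equality
  have hspanR : Submodule.span ℚ (iotaF n ''
      (AddSubmonoid.closure (R : Set (Fin n → ℤ)) : Set (Fin n → ℤ))) =
      Submodule.span ℚ (iotaF n ''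
      (AddSubmonoid.closure (P : Set (Fin n → ℤ)) : Set (Fin n → ℤ))) := by
    rw [span_image_closure, span_image_closure]
    have haP : iotaF n a ∈ Submodule.span ℚ (iotaF n '' (P : Set (Fin n → ℤ))) := by
      rw [ha, map_sum]
      exact sum_mem fun p hp => Submodule.subset_span ⟨p, hp, rfl⟩
    apply le_antisymm
    · rw [Submodule.span_le]
      rintro y ⟨r, hr, rfl⟩
      rcases Finset.mem_insert.mp hr with h | h
      · rw [h]; exact haP
      · obtain ⟨p, hp, rfl⟩ := Finset.mem_image.mp h
        rw [map_add]
        exact add_mem haP (Submodule.subset_span ⟨p, hp, rfl⟩)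
    · rw [Submodule.span_le]
      rintro y ⟨p, hp, rfl⟩
      have h1 : iotaF n (a + p) ∈
          Submodule.span ℚ (iotaF n '' (R : Set (Fin n → ℤ))) :=
        Submodule.subset_span ⟨a + p,
          Finset.mem_insert_of_mem (Finset.mem_image_of_mem _ hp), rfl⟩
      have h2 : iotaF n a ∈
          Submodule.span ℚ (iotaF n '' (R : Set (Fin n → ℤ))) :=
        Submodule.subset_span ⟨a, Finset.mem_insert_self _ _, rfl⟩
      have h3 : iotaF n p = iotaF n (a + p) - iotaF n a := by
        rw [map_add]; abel
      rw [h3]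
      exact sub_mem h1 h2
  -- lower bound for X
  obtain ⟨m', q', hq'mem, hq'ind, hq'rank⟩ :=
    exists_indep (AddSubmonoid.closure (R : Set (Fin n → ℤ)) : Set (Fin n → ℤ))
  rw [hspanR] at hq'rank
  have hlow_X : ((m' : ℕ) : WithBot ℕ) ≤ dimZ X := by
    refine rank_le_dimZ X x q' hq'ind fun t => ?_
    apply hxsub
    refine Set.mem_vadd_set.mpr ⟨∑ i, t i • q' i, ?_, by rw [vadd_eq_add]⟩
    exact sum_mem fun i _ => AddSubmonoid.nsmul_mem _ (hq'mem i) _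
  rw [← hq'rank] at hlow_X
  rw [← hqrank] at hlow_L
  exact le_antisymm (hup_X.trans hlow_L) (hup_L.trans hlow_X)
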